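/- For every open set U ⊆ (ℕ∞)^ℕ with Q_Z ⊆ U there exists g : ℕ → ℕ such that every strictly increasing function f : ℕ → ℕ (viewed as an element of (ℕ∞)^ℕ via the inclusion ℕ ⊆ ℕ∞) which does not belong to U satisfies f(n) ≤ g(n) for all n ∈ ℕ. Equivalently, every strictly increasing f : ℕ → ℕ with f(n) > g(n) for at least one n belongs to U. -/

import Mathlib

/-- For a finite sequence `s`, the element `q_s` of `(ℕ∞)^ℕ` extending `s` by `∞`. -/
def qSeq (s : List ℕ) : ℕ → ℕ∞ :=
  fun k => if h : k < s.length then (s.get ⟨k, h⟩ : ℕ∞) else ⊤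

/-- The countable dense subset `Q_Z = {q_s : s finite strictly increasing}`. -/
def QZ : Set (ℕ → ℕ∞) :=
  {f | ∃ s : List ℕ, List.Pairwise (· < ·) s ∧ f = qSeq s}

lemma tendsto_coe_atTop_enat : Filter.Tendsto ((↑) : ℕ → ℕ∞) Filter.atTop (nhds ⊤) := by
  rw [ENat.tendsto_nhds_top_iff_natCast_lt]
  intro n
  filter_upwards [Filter.eventually_gt_atTop n] with a ha
  exact_mod_cast ha

lemma nat_mem_of_nhds_top {V : Set ℕ∞} (hV : V ∈ nhds (⊤ : ℕ∞)) :
    ∃ m : ℕ, ∀ a : ℕ, m ≤ a → (a : ℕ∞) ∈ V := by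
  have := tendsto_coe_atTop_enat hV
  rw [Filter.mem_map, Filter.mem_atTop_sets] at this
  exact this

lemma key_lemma (U : Set (ℕ → ℕ∞)) (hU : IsOpen U) (hQU : QZ ⊆ U) (s : List ℕ) :
    ∃ m : ℕ, List.Pairwise (· < ·) s → ∀ f : ℕ → ℕ, StrictMono f →
      (∀ k (h : k < s.length), f k = s.get ⟨k, h⟩) → m < f s.length →
      (fun n => (f n : ℕ∞)) ∈ U := by
  by_cases hs : List.Pairwise (· < ·) s
  swap
  · exact ⟨0, fun h => absurd h hs⟩
  have hq : qSeq s ∈ U := hQU ⟨s, hs, rfl⟩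
  have hnh : U ∈ nhds (qSeq s) := hU.mem_nhds hq
  rw [nhds_pi, Filter.mem_pi] at hnh
  obtain ⟨I, hIfin, V, hV, hVU⟩ := hnh
  -- for each i ≥ s.length, V i is a neighborhood of ⊤
  have htop : ∀ i, ¬ i < s.length → V i ∈ nhds (⊤ : ℕ∞) := by
    intro i hi
    have := hV i
    rwa [qSeq, dif_neg hi] at this
  choose mc hmc using fun i h => nat_mem_of_nhds_top (htop i h)
  set m : ℕ := hIfin.toFinset.sup (fun i => if h : ¬ i < s.length then mc i h else 0) with hm
  refine ⟨m, fun _ f hf hfs hmf => ?_⟩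
  apply hVU
  intro i hi
  by_cases h : i < s.length
  · have heq : (f i : ℕ∞) = qSeq s i := by
      rw [qSeq, dif_pos h, hfs i h]
    exact Set.mem_of_eq_of_mem heq (mem_of_mem_nhds (hV i))
  · apply hmc i h
    have h1 : (if h' : ¬ i < s.length then mc i h' else 0) ≤ m :=
      Finset.le_sup (f := fun i => if h : ¬ i < s.length then mc i h else 0)
        (hIfin.mem_toFinset.mpr hi)
    rw [dif_pos h] at h1
    have h2 : f s.length ≤ f i := hf.monotone (Nat.le_of_not_lt h)
    omega

/-- auxiliary recursive bound -/
def gA (M : List ℕ → ℕ) : ℕ → ℕ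
  | 0 => M []
  | n + 1 => max (gA M n)
      (((Finset.range (gA M n + 1)).powersetCard (n + 1)).sup
        (fun t => M (t.sort (· ≤ ·))))

lemma gA_mono (M : List ℕ → ℕ) : Monotone (gA M) :=
  monotone_nat_of_le_succ (fun n => le_max_left _ _)

theorem stmt4 (U : Set (ℕ → ℕ∞)) (hU : IsOpen U) (hQU : QZ ⊆ U) :
    ∃ g : ℕ → ℕ, ∀ f : ℕ → ℕ, StrictMono f →
      (fun n => (f n : ℕ∞)) ∉ U → ∀ n, f n ≤ g n := by
  choose M hM using key_lemma U hU hQU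
  refine ⟨gA M, fun f hf hfU n => ?_⟩
  by_contra hcon
  push_neg at hcon
  have hex : ∃ n, gA M n < f n := ⟨n, hcon⟩
  clear hcon n
  let n := Nat.find hex
  have hn : gA M n < f n := Nat.find_spec hex
  have hmin : ∀ k, k < n → f k ≤ gA M k := fun k hk =>
    Nat.le_of_not_lt (Nat.find_min hex hk)
  set s : List ℕ := (List.range n).map f with hsdef
  have hslen : s.length = n := by simp [hsdef]
  have hsget : ∀ k (h : k < s.length), f k = s.get ⟨k, h⟩ := by
    intro k h
    simp [hsdef]
  have hssorted : List.Pairwise (· < ·) s := by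
    apply List.Pairwise.map
    · exact fun a b hab => hf hab
    · exact List.pairwise_lt_range (n := n)
  have hMs : M s ≤ gA M n := by
    rcases n with _ | m
    · have : s = [] := by simpa using hslen
      rw [this]
      rfl
    · have hnodup : s.Nodup := hssorted.nodup
      have hsorted_le : List.Pairwise (· ≤ ·) s := hssorted.imp le_of_lt
      have hsort : s.toFinset.sort (· ≤ ·) = s :=
        (List.toFinset_sort (· ≤ ·) hnodup).mpr hsorted_le
      have hcard : s.toFinset.card = m + 1 := by
        rw [List.toFinset_card_of_nodup hnodup, hslen]
      have hsub : s.toFinset ⊆ Finset.range (gA M m + 1) := by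
        intro x hx
        rw [List.mem_toFinset, hsdef] at hx
        obtain ⟨k, hk, rfl⟩ := List.mem_map.mp hx
        rw [List.mem_range] at hk
        have h1 : f k ≤ gA M k := hmin k hk
        have h2 : gA M k ≤ gA M m := gA_mono M (by omega)
        rw [Finset.mem_range]
        omega
      have hmem : s.toFinset ∈ (Finset.range (gA M m + 1)).powersetCard (m + 1) :=
        Finset.mem_powersetCard.mpr ⟨hsub, hcard⟩
      have hle := Finset.le_sup (f := fun t => M (t.sort (· ≤ ·))) hmem
      simp only [hsort] at hle
      calc M s ≤ _ := hle
        _ ≤ gA M (m + 1) := by rw [gA]; exact le_max_right _ _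
  exact hfU (hM s hssorted f hf hsget (by rw [hslen]; omega))
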